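/- arXiv:nlin/0406038 — 6 statements merged into one kernel-verified Lean document; each statement's English description precedes it below -/
import Mathlib

section
/- The functions ω₁(x) = √(−b)(1−x)/(b−x), ω₂(x) = −√(−b(b−1))/(b−x), ω₃(x) = √(b−1)·x/(b−x) satisfy the time-dependent Euler top equations dω₁/dx = ω₂ω₃/x, dω₂/dx = ω₁ω₃/(x(x−1)), dω₃/dx = ω₁ω₂/(1−x) on any domain where x ≠ 0, 1, b. -/
/-- The functions ω₁(x) = √(−b)(1−x)/(b−x), ω₂(x) = −√(−b(b−1))/(b−x),
ω₃(x) = √(b−1)·x/(b−x) satisfy the time-dependent Euler top equations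
ω₁' = ω₂ω₃/x, ω₂' = ω₁ω₃/(x(x−1)), ω₃' = ω₁ω₂/(1−x) wherever x ≠ 0, 1, b.
The square roots s1, s2, s3 of −b, −b(b−1), b−1 are fixed with consistent signs. -/
theorem stmt_0 (b s1 s2 s3 : ℂ) (hb0 : b ≠ 0) (hb1 : b ≠ 1)
    (hs1 : s1 ^ 2 = -b) (hs3 : s3 ^ 2 = b - 1) (hs2 : s2 = s1 * s3)
    (x : ℂ) (hx0 : x ≠ 0) (hx1 : x ≠ 1) (hxb : x ≠ b) :
    HasDerivAt (fun t => s1 * (1 - t) / (b - t))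
      ((-s2 / (b - x)) * (s3 * x / (b - x)) / x) x ∧
    HasDerivAt (fun t => -s2 / (b - t))
      ((s1 * (1 - x) / (b - x)) * (s3 * x / (b - x)) / (x * (x - 1))) x ∧
    HasDerivAt (fun t => s3 * t / (b - t))
      ((s1 * (1 - x) / (b - x)) * (-s2 / (b - x)) / (1 - x)) x := by
  subst hs2
  have hbx : b - x ≠ 0 := sub_ne_zero.mpr (Ne.symm hxb)
  have hx1' : x - 1 ≠ 0 := sub_ne_zero.mpr hx1
  have h1x : (1 : ℂ) - x ≠ 0 := sub_ne_zero.mpr (Ne.symm hx1)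
  have hden : HasDerivAt (fun t : ℂ => b - t) (-1) x := by
    simpa using (hasDerivAt_id x).const_sub b
  refine ⟨?_, ?_, ?_⟩
  · have hnum : HasDerivAt (fun t : ℂ => s1 * (1 - t)) (s1 * (-1)) x := by
      simpa using ((hasDerivAt_id x).const_sub 1).const_mul s1
    have h := hnum.div hden hbx
    refine h.congr_deriv ?_
    have e : (-(s1 * s3) / (b - x)) * (s3 * x / (b - x)) / x
        = -s1 * s3 ^ 2 * x / ((b - x) ^ 2 * x) := by field_simp
    rw [e, hs3]; field_simp; ring
  · have hnum : HasDerivAt (fun _ : ℂ => -(s1 * s3)) 0 x := hasDerivAt_const x _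
    have h := hnum.div hden hbx
    refine h.congr_deriv ?_
    field_simp; ring
  · have hnum : HasDerivAt (fun t : ℂ => s3 * t) s3 x := by
      simpa using (hasDerivAt_id x).const_mul s3
    have h := hnum.div hden hbx
    refine h.congr_deriv ?_
    have e : (s1 * (1 - x) / (b - x)) * (-(s1 * s3) / (b - x)) / (1 - x)
        = -(s1 ^ 2) * s3 * (1 - x) / ((b - x) ^ 2 * (1 - x)) := by field_simp
    rw [e, hs1]; field_simp; ring
end

section
/- The function y(x) = −(b−1)x/(x−b) satisfies the Painlevé VI equation y'' = (1/2)(1/y + 1/(y−1) + 1/(y−x))(y')² − (1/x + 1/(x−1) + 1/(y−x))y' + [y(y−1)(y−x)/(x²(x−1)²)][α + βx/y² + γ(x−1)/(y−1)² + δx(x−1)/(y−x)²] with parameters (α, β, γ, δ) = (1/2, 0, 0, 1/2). -/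
/-- The Painlevé VI equation with parameters (α,β,γ,δ), as a pointwise condition
on a function y at the point x. -/
def PainleveVI (α β γ δ : ℂ) (y : ℂ → ℂ) (x : ℂ) : Prop :=
  deriv (deriv y) x =
    (1 / 2) * (1 / y x + 1 / (y x - 1) + 1 / (y x - x)) * (deriv y x) ^ 2
      - (1 / x + 1 / (x - 1) + 1 / (y x - x)) * deriv y x
      + (y x * (y x - 1) * (y x - x) / (x ^ 2 * (x - 1) ^ 2)) *
        (α + β * x / (y x) ^ 2 + γ * (x - 1) / (y x - 1) ^ 2
          + δ * x * (x - 1) / (y x - x) ^ 2)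

private lemma hasDerivAt_y (b z : ℂ) (hz : z - b ≠ 0) :
    HasDerivAt (fun x => -((b - 1) * x) / (x - b)) (b * (b - 1) / (z - b) ^ 2) z := by
  have h1 : HasDerivAt (fun x : ℂ => -((b - 1) * x)) (-(b - 1)) z := by
    have := ((hasDerivAt_id z).const_mul (b - 1)).neg
    exact this.congr_deriv (by ring)
  have h2 : HasDerivAt (fun x : ℂ => x - b) 1 z := by
    simpa using (hasDerivAt_id z).sub_const b
  have := h1.div h2 hz
  exact this.congr_deriv (by field_simp; ring)

set_option maxHeartbeats 2000000 in
set_option maxHeartbeats 4000000 in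
private lemma key_identity (b x : ℂ) (hb0 : b ≠ 0) (hb1' : b - 1 ≠ 0) (hx0 : x ≠ 0) (hx1' : x - 1 ≠ 0)
    (hxb' : x - b ≠ 0) (h1x : (1:ℂ) - x ≠ 0) :
    -(2 * b * (b - 1)) / (x - b) ^ 3 =
    (1 / 2) * (1 / (-((b - 1) * x) / (x - b)) + 1 / (-b * (x - 1) / (x - b)) + 1 / (x * (1 - x) / (x - b))) * (b * (b - 1) / (x - b) ^ 2) ^ 2
      - (1 / x + 1 / (x - 1) + 1 / (x * (1 - x) / (x - b))) * (b * (b - 1) / (x - b) ^ 2)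
      + ((-((b - 1) * x) / (x - b)) * (-b * (x - 1) / (x - b)) * (x * (1 - x) / (x - b)) / (x ^ 2 * (x - 1) ^ 2)) *
        ((1/2 : ℂ) + 0 * x / (-((b - 1) * x) / (x - b)) ^ 2 + 0 * (x - 1) / (-b * (x - 1) / (x - b)) ^ 2
          + (1/2) * x * (x - 1) / (x * (1 - x) / (x - b)) ^ 2) := by
  have hn1 : -((b - 1) * x) ≠ 0 := neg_ne_zero.mpr (mul_ne_zero hb1' hx0)
  have hn2 : -b * (x - 1) ≠ 0 := mul_ne_zero (neg_ne_zero.mpr hb0) hx1'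
  have hn3 : x * (1 - x) ≠ 0 := mul_ne_zero hx0 h1x
  simp only [one_div, inv_div, div_pow, zero_mul, zero_div, add_zero]
  rw [div_add_div _ _ hn1 hn2, div_add_div _ _ (mul_ne_zero hn1 hn2) hn3]
  field_simp [hn1, hn2, hn3, hxb', hx0, hx1', h1x, hb0, hb1']
  have hQ1 : (2 * ((b - 1) * x * (b * (x - 1)) * (x * (1 - x))) * ((x - b) ^ 2) ^ 2) ≠ 0 := by
    apply mul_ne_zero
    apply mul_ne_zero two_ne_zero
    · exact mul_ne_zero (mul_ne_zero (mul_ne_zero hb1' hx0) (mul_ne_zero hb0 hx1')) hn3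
    · exact pow_ne_zero 2 (pow_ne_zero 2 hxb')
  have hQ2 : ((x - b) * (x - b) * (x - b) * (x ^ 2 * (x - 1) ^ 2) * (2 * (x * (1 - x)) ^ 2)) ≠ 0 := by
    apply mul_ne_zero
    apply mul_ne_zero
    · exact mul_ne_zero (mul_ne_zero hxb' hxb') hxb'
    · exact mul_ne_zero (pow_ne_zero 2 hx0) (pow_ne_zero 2 hx1')
    · exact mul_ne_zero two_ne_zero (pow_ne_zero 2 hn3)
  have hD : (2 : ℂ) * (x - b) ≠ 0 := mul_ne_zero two_ne_zero hxb'
  have e1 : (((-((x - b) * (b * (x - 1))) + -((b - 1) * x * (x - b))) * (x * (1 - x)) + (b - 1) * x * (b * (x - 1)) * (x - b)) *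
              (b * (b - 1)) ^ 2 *
            (x * (x - 1) * (x * (1 - x)) * (x - b) ^ 2) /
          (2 * ((b - 1) * x * (b * (x - 1)) * (x * (1 - x))) * ((x - b) ^ 2) ^ 2))
      = b * (b - 1) * (x * (1 - x) * (x + 2 * b - 2 * b * x - b ^ 2)) / (2 * (x - b)) := by
    rw [div_eq_div_iff hQ1 hD]; ring
  have e2 : ((b - 1) * x * (b * (x - 1)) * (x * (1 - x)) * ((x * (1 - x)) ^ 2 + x * (x - 1) * (x - b) ^ 2) *
          (x * (x - 1) * (x * (1 - x)) * (x - b) ^ 2) /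
        ((x - b) * (x - b) * (x - b) * (x ^ 2 * (x - 1) ^ 2) * (2 * (x * (1 - x)) ^ 2)))
      = b * (b - 1) * (x ^ 2 * (1 - x) ^ 2 + x * (x - 1) * (x - b) ^ 2) / (2 * (x - b)) := by
    rw [div_eq_div_iff hQ2 hD]; ring
  ring


/-- y(x) = −(b−1)x/(x−b) satisfies Painlevé VI with (α,β,γ,δ) = (1/2,0,0,1/2). -/
theorem stmt_3 (b : ℂ) (hb0 : b ≠ 0) (hb1 : b ≠ 1)
    (y : ℂ → ℂ) (hy : y = fun x => -((b - 1) * x) / (x - b))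
    (x : ℂ) (hx0 : x ≠ 0) (hx1 : x ≠ 1) (hxb : x ≠ b)
    (hy0 : y x ≠ 0) (hy1 : y x - 1 ≠ 0) (hyx : y x - x ≠ 0) :
    PainleveVI (1 / 2) 0 0 (1 / 2) y x := by
  have hxb' : x - b ≠ 0 := sub_ne_zero.mpr hxb
  have hx1' : x - 1 ≠ 0 := sub_ne_zero.mpr hx1
  subst hy
  -- deriv y agrees with g near x
  have hopen : IsOpen {z : ℂ | z - b ≠ 0} := by
    have : {z : ℂ | z - b ≠ 0} = (fun z => z - b) ⁻¹' {0}ᶜ := rfl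
    rw [this]
    exact (isOpen_compl_singleton).preimage (continuous_id.sub continuous_const)
  have hmem : {z : ℂ | z - b ≠ 0} ∈ nhds x := hopen.mem_nhds hxb'
  have hdy : deriv (fun x => -((b - 1) * x) / (x - b)) =ᶠ[nhds x]
      (fun z => b * (b - 1) / (z - b) ^ 2) := by
    filter_upwards [hmem] with z hz
    exact (hasDerivAt_y b z hz).deriv
  have hdy2 : HasDerivAt (fun z : ℂ => b * (b - 1) / (z - b) ^ 2)
      (-(2 * b * (b - 1)) / (x - b) ^ 3) x := by
    have h2 : HasDerivAt (fun z : ℂ => (z - b) ^ 2) (2 * (x - b) ^ 1 * 1) x :=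
      ((hasDerivAt_id x).sub_const b).pow 2
    have := (hasDerivAt_const x (b * (b - 1))).div h2 (pow_ne_zero 2 hxb')
    exact this.congr_deriv (by field_simp; ring)
  have hd1 : deriv (fun x => -((b - 1) * x) / (x - b)) x = b * (b - 1) / (x - b) ^ 2 :=
    (hasDerivAt_y b x hxb').deriv
  have hd2 : deriv (deriv (fun x => -((b - 1) * x) / (x - b))) x
      = -(2 * b * (b - 1)) / (x - b) ^ 3 := by
    rw [Filter.EventuallyEq.deriv_eq hdy]
    exact hdy2.deriv
  unfold PainleveVI
  rw [hd1, hd2]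
  show -(2 * b * (b - 1)) / (x - b) ^ 3 = _
  have hb1' : b - 1 ≠ 0 := sub_ne_zero.mpr hb1
  have h1x : (1:ℂ) - x ≠ 0 := fun h => hx1' (by linear_combination -h)
  have hB : -((b - 1) * x) / (x - b) - 1 = -b * (x - 1) / (x - b) := by
    field_simp; ring
  have hC : -((b - 1) * x) / (x - b) - x = x * (1 - x) / (x - b) := by
    field_simp; ring
  simp only [hB, hC]
  exact key_identity b x hb0 hb1' hx0 hx1' hxb' h1x
end

section
/- The function y(x) = (x² − b)/(2(x − b)) satisfies the Painlevé VI equation with parameters (α, β, γ, δ) = (2, −1/2, 1/2, 0). -/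
set_option maxHeartbeats 4000000 in
/-- y(x) = (x²−b)/(2(x−b)) satisfies Painlevé VI with (α,β,γ,δ) = (2,−1/2,1/2,0). -/
theorem stmt_5 (b : ℂ) (hb0 : b ≠ 0) (hb1 : b ≠ 1)
    (y : ℂ → ℂ) (hy : y = fun x => (x ^ 2 - b) / (2 * (x - b)))
    (x : ℂ) (hx0 : x ≠ 0) (hx1 : x ≠ 1) (hxb : x ≠ b)
    (hy0 : y x ≠ 0) (hy1 : y x - 1 ≠ 0) (hyx : y x - x ≠ 0) :
    PainleveVI 2 (-(1 / 2)) (1 / 2) 0 y x := by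
  have hxb' : x - b ≠ 0 := sub_ne_zero.mpr hxb
  have hx1' : x - 1 ≠ 0 := sub_ne_zero.mpr hx1
  set g : ℂ → ℂ := fun z => (z ^ 2 - 2 * b * z + b) / (2 * (z - b) ^ 2) with hg
  have hd1 : ∀ z : ℂ, z ≠ b → HasDerivAt y (g z) z := by
    intro z hz
    have hz' : z - b ≠ 0 := sub_ne_zero.mpr hz
    have h1 : HasDerivAt (fun w : ℂ => w ^ 2 - b) (2 * z) z := by
      simpa using ((hasDerivAt_pow 2 z).sub_const b)
    have h2 : HasDerivAt (fun w : ℂ => 2 * (w - b)) 2 z := by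
      simpa using ((hasDerivAt_id z).sub_const b).const_mul 2
    have h2ne : (2 : ℂ) * (z - b) ≠ 0 := mul_ne_zero two_ne_zero hz'
    have := h1.div h2 h2ne
    rw [hy]
    refine this.congr_deriv (Eq.symm ?_)
    rw [hg]
    rw [div_eq_div_iff (mul_ne_zero two_ne_zero (pow_ne_zero _ hz')) (pow_ne_zero _ h2ne)]
    ring
  have hmem : {z : ℂ | z ≠ b} ∈ nhds x := (isOpen_ne).mem_nhds hxb
  have heq : deriv y =ᶠ[nhds x] g :=
    Filter.eventually_of_mem hmem fun z hz => (hd1 z hz).deriv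
  have hdy : deriv y x = (x ^ 2 - 2 * b * x + b) / (2 * (x - b) ^ 2) := (hd1 x hxb).deriv
  have hd2 : HasDerivAt g (b * (b - 1) / (x - b) ^ 3) x := by
    have h1 : HasDerivAt (fun z : ℂ => z ^ 2 - 2 * b * z + b) (2 * x - 2 * b) x := by
      have : HasDerivAt (fun z : ℂ => z ^ 2 - 2 * b * z) (2 * x - 2 * b) x := by
        simpa [mul_comm] using
          (hasDerivAt_pow 2 x).fun_sub (((hasDerivAt_id x)).const_mul (2 * b))
      simpa using this.add_const b
    have h2 : HasDerivAt (fun z : ℂ => 2 * (z - b) ^ 2) (2 * (2 * (x - b))) x := by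
      have : HasDerivAt (fun z : ℂ => (z - b) ^ 2) (2 * (x - b)) x := by
        simpa using (((hasDerivAt_id x).sub_const b).fun_pow 2)
      simpa using this.const_mul 2
    have hne : 2 * (x - b) ^ 2 ≠ 0 := mul_ne_zero two_ne_zero (pow_ne_zero _ hxb')
    have := h1.div h2 hne
    refine this.congr_deriv (Eq.symm ?_)
    rw [div_eq_div_iff (pow_ne_zero _ hxb') (pow_ne_zero _ hne)]
    ring
  have hddy : deriv (deriv y) x = b * (b - 1) / (x - b) ^ 3 := by
    rw [heq.deriv_eq, hd2.deriv]
  have hyx' : y x = (x ^ 2 - b) / (2 * (x - b)) := by rw [hy]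
  have h2xb : (2 : ℂ) * (x - b) ≠ 0 := mul_ne_zero two_ne_zero hxb'
  have e2 : y x - 1 = (x ^ 2 - 2 * x + b) / (2 * (x - b)) := by
    rw [hyx', div_sub' h2xb]; ring_nf
  have hbx' : b - x ≠ 0 := sub_ne_zero.mpr (Ne.symm hxb)
  have e3 : y x - x = (x ^ 2 - 2 * b * x + b) / (2 * (b - x)) := by
    rw [hyx', div_sub' h2xb, div_eq_div_iff h2xb (mul_ne_zero two_ne_zero hbx')]
    ring
  have hA : x ^ 2 - b ≠ 0 := by
    intro h
    apply hy0
    rw [hyx', h, zero_div]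
  have hB : x ^ 2 - 2 * x + b ≠ 0 := by
    intro h
    apply hy1
    rw [e2, h, zero_div]
  have hC : x ^ 2 - 2 * b * x + b ≠ 0 := by
    intro h
    apply hyx
    rw [e3, h, zero_div]
  have hB' : x * (x - 2) + b ≠ 0 := by ring_nf; ring_nf at hB; exact hB
  have hC' : x * (x - 2 * b) + b ≠ 0 := by ring_nf; ring_nf at hC; exact hC
  have hT1 : (1 / 2 : ℂ) * (1 / y x + 1 / (y x - 1) + 1 / (y x - x)) * (deriv y x) ^ 2
      = ((x ^ 2 - 2 * x + b) * (x ^ 2 - 2 * b * x + b) + (x ^ 2 - b) * (x ^ 2 - 2 * b * x + b)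
          - (x ^ 2 - b) * (x ^ 2 - 2 * x + b)) * (x ^ 2 - 2 * b * x + b)
        / (4 * (x ^ 2 - b) * (x ^ 2 - 2 * x + b) * (x - b) ^ 3) := by
    rw [e2, e3, hyx', hdy]
    field_simp
    ring
  have hT2 : (1 / x + 1 / (x - 1) + 1 / (y x - x)) * deriv y x
      = ((x - 1) * (x ^ 2 - 2 * b * x + b) + x * (x ^ 2 - 2 * b * x + b)
          - 2 * x * (x - 1) * (x - b)) / (2 * x * (x - 1) * (x - b) ^ 2) := by
    rw [e3, hdy]
    field_simp
    ring
  have hT3 : (y x * (y x - 1) * (y x - x) / (x ^ 2 * (x - 1) ^ 2)) *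
        ((2 : ℂ) + -(1 / 2) * x / (y x) ^ 2 + (1 / 2) * (x - 1) / (y x - 1) ^ 2
          + 0 * x * (x - 1) / (y x - x) ^ 2)
      = -((x ^ 2 - 2 * b * x + b) * ((x ^ 2 - b) ^ 2 * (x ^ 2 - 2 * x + b) ^ 2
            - x * (x - b) ^ 2 * (x ^ 2 - 2 * x + b) ^ 2
            + (x - 1) * (x - b) ^ 2 * (x ^ 2 - b) ^ 2))
        / (4 * (x - b) ^ 3 * x ^ 2 * (x - 1) ^ 2 * (x ^ 2 - b) * (x ^ 2 - 2 * x + b)) := by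
    rw [e2, e3, hyx']
    field_simp
    ring
  unfold PainleveVI
  rw [hddy, hT1, hT2, hT3]
  field_simp
  ring
end

section
/- Define r_i(z) = z^{−i}(b e^z + (1−b)Σ_{j=0}^{i−1} z^j/j!) for i ≥ 1 (as formal Laurent series, or with e^z truncated to a sufficiently high polynomial). Then for all i, j ≥ 1, Res_z r_i(z) r_j(−z) = 0, where Res_z extracts the coefficient of z^{−1}. -/
/-- Coefficient of `z^n` in the Laurent series
`r_i(z) = z^{-i} (b e^z + (1-b) ∑_{j=0}^{i-1} z^j / j!)`, namely
`(if n < 0 then 1 else b) / (n+i)!` for `n ≥ -i` and `0` otherwise. -/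
noncomputable def rCoeff (b : ℂ) (i : ℕ) (n : ℤ) : ℂ :=
  if -(i : ℤ) ≤ n then (if n < 0 then 1 else b) / (n + i).toNat.factorial else 0

/-- `Res_z f(z) g(-z)`: the coefficient of `z^{-1}` in `f(z)g(-z)`, where `f, g`
are given by their coefficient functions. -/
noncomputable def resPair (f g : ℤ → ℂ) : ℂ :=
  ∑' m : ℤ, f m * ((-1 : ℂ) ^ (-1 - m) * g (-1 - m))

lemma neg_one_zpow_sub' (a c : ℕ) : (-1 : ℂ) ^ ((a : ℤ) - c) = (-1) ^ a * (-1) ^ c := by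
  rw [zpow_sub₀ (by norm_num : (-1:ℂ) ≠ 0), zpow_natCast, zpow_natCast,
    div_eq_mul_inv, ← inv_pow, inv_neg, inv_one]

/-- For all i, j ≥ 1, `Res_z r_i(z) r_j(-z) = 0`. -/
theorem stmt_14 (b : ℂ) (i j : ℕ) (hi : 1 ≤ i) (hj : 1 ≤ j) :
    resPair (rCoeff b i) (rCoeff b j) = 0 := by
  set N := i + j - 1 with hNdef
  have hN : N + 1 = i + j := by omega
  have hsum : resPair (rCoeff b i) (rCoeff b j)
      = ∑ m ∈ Finset.Icc (-(i:ℤ)) ((j:ℤ)-1),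
          rCoeff b i m * ((-1 : ℂ) ^ (-1 - m) * rCoeff b j (-1 - m)) := by
    apply tsum_eq_sum
    intro m hm
    simp only [Finset.mem_Icc, not_and_or, not_le] at hm
    rcases hm with h | h
    · rw [rCoeff, if_neg (by omega)]; ring
    · rw [show rCoeff b j (-1 - m) = 0 from by rw [rCoeff, if_neg (by omega)]]; ring
  rw [hsum]
  have hinj : Function.Injective (fun k : ℕ => (k:ℤ) - i) := by
    intro a c h; simp only [sub_left_inj, Nat.cast_inj] at h; exact h
  have hmap : Finset.Icc (-(i:ℤ)) ((j:ℤ)-1)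
      = (Finset.range (i+j)).map ⟨fun k : ℕ => (k:ℤ) - i, hinj⟩ := by
    ext m
    simp only [Finset.mem_Icc, Finset.mem_map, Finset.mem_range,
      Function.Embedding.coeFn_mk]
    constructor
    · rintro ⟨h1, h2⟩
      exact ⟨(m + i).toNat, by omega, by omega⟩
    · rintro ⟨k, hk, rfl⟩
      omega
  rw [hmap, Finset.sum_map]
  simp only [Function.Embedding.coeFn_mk]
  have hterm : ∀ k ∈ Finset.range (i+j),
      rCoeff b i ((k:ℤ) - i) * ((-1 : ℂ) ^ (-1 - ((k:ℤ) - i)) *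
        rCoeff b j (-1 - ((k:ℤ) - i)))
      = (b * (-1:ℂ)^(i-1) / N.factorial) * ((-1:ℂ)^k * (N.choose k)) := by
    intro k hk
    rw [Finset.mem_range] at hk
    have hkN : k ≤ N := by omega
    have he : (-1 : ℂ) ^ (-1 - ((k:ℤ) - i)) = (-1)^(i-1) * (-1)^k := by
      rw [show -1 - ((k:ℤ) - i) = ((i-1 : ℕ):ℤ) - k by push_cast; omega]
      exact neg_one_zpow_sub' (i-1) k
    set P := (if (k:ℤ) - i < 0 then (1:ℂ) else b) with hP
    set Q := (if -1 - ((k:ℤ) - i) < 0 then (1:ℂ) else b) with hQ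
    have h1 : rCoeff b i ((k:ℤ) - i) = P / k.factorial := by
      rw [rCoeff, if_pos (by omega), show (k:ℤ) - i + i = (k:ℤ) by ring,
        Int.toNat_natCast]
    have h2 : rCoeff b j (-1 - ((k:ℤ) - i)) = Q / (N - k).factorial := by
      rw [rCoeff, if_pos (by omega)]
      rw [show -1 - ((k:ℤ) - i) + j = ((N - k : ℕ):ℤ) by omega, Int.toNat_natCast]
    have hb : P * Q = b := by
      by_cases h : (k:ℤ) - i < 0
      · rw [hP, hQ, if_pos h, if_neg (by omega), one_mul]
      · rw [hP, hQ, if_neg h, if_pos (by omega), mul_one]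
    have hfac : (N.choose k : ℂ) * k.factorial * (N-k).factorial = N.factorial := by
      exact_mod_cast congrArg (Nat.cast : ℕ → ℂ)
        (Nat.choose_mul_factorial_mul_factorial hkN)
    have hk2 : (N.factorial : ℂ) ≠ 0 := Nat.cast_ne_zero.mpr N.factorial_ne_zero
    have hinv : (1:ℂ)/((k.factorial : ℂ) * (N-k).factorial)
        = (N.choose k)/N.factorial := by
      rw [div_eq_div_iff (mul_ne_zero (Nat.cast_ne_zero.mpr k.factorial_ne_zero) (Nat.cast_ne_zero.mpr (N-k).factorial_ne_zero)) hk2]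
      linear_combination -hfac
    rw [h1, h2, he,
      show P / (k.factorial : ℂ) * ((-1)^(i-1) * (-1)^k * (Q / (N-k).factorial))
        = (P * Q) * ((-1:ℂ)^(i-1) * (-1)^k) *
          (1/((k.factorial : ℂ) * (N-k).factorial)) from by ring,
      hb, hinv]
    ring
  rw [Finset.sum_congr rfl hterm, ← Finset.mul_sum]
  have halt : ∑ k ∈ Finset.range (i+j), ((-1:ℂ)^k * (N.choose k)) = 0 := by
    have h := Int.alternating_sum_range_choose (n := N)
    rw [if_neg (by omega : N ≠ 0)] at h
    have h2 : ((∑ k ∈ Finset.range (N+1), (-1:ℤ)^k * (N.choose k) : ℤ) : ℂ) = 0 := by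
      rw [h]; norm_num
    rw [← hN]
    push_cast at h2
    exact h2
  rw [halt, mul_zero]
end

section
/- For the partition with μ−1 parts all equal to μ+1, the Schur polynomial evaluated at t = (1,0,0,…) equals S^{(μ−1)}_{μ+1,…,μ+1}(1,0,0,…) = det(1/(μ+j−i+1)!)_{1≤i,j≤μ−1} = μ · (∏_{i=1}^{μ−1} (i!)²) / (∏_{i=1}^{2μ−1} i!). -/
/-- The elementary Schur polynomial `S_ℓ` evaluated at `t = (1,0,0,…)`:
`S_ℓ(1,0,0,…) = 1/ℓ!` for `ℓ ≥ 0` and `0` for `ℓ < 0`. -/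
noncomputable def eS (ℓ : ℤ) : ℚ :=
  if 0 ≤ ℓ then (ℓ.toNat.factorial : ℚ)⁻¹ else 0

open Finset Polynomial

private lemma entry_eq (m : ℕ) (i j : Fin (m + 1)) :
    eS (((m : ℤ) + 2) + 1 + (i : ℤ) - (j : ℤ)) =
      ((m + 3 + (i : ℕ)).factorial : ℚ)⁻¹ *
        ((m + 3 + (i : ℕ)).descFactorial (j : ℕ) : ℚ) := by
  have hj : (j : ℕ) ≤ m + 3 + (i : ℕ) := by omega
  have hjm : (j : ℕ) < m + 1 := j.isLt
  have h0 : (0 : ℤ) ≤ (m : ℤ) + 2 + 1 + (i : ℤ) - (j : ℤ) := by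
    have : ((j : ℕ) : ℤ) < (m : ℤ) + 1 := by exact_mod_cast hjm
    omega
  rw [eS, if_pos h0]
  have ht : ((m : ℤ) + 2 + 1 + (i : ℤ) - (j : ℤ)).toNat = m + 3 + (i : ℕ) - (j : ℕ) := by
    omega
  rw [ht]
  have hnat := Nat.factorial_mul_descFactorial hj
  have hd : ((m + 3 + (i : ℕ)).descFactorial (j : ℕ) : ℚ) ≠ 0 := by
    have : (m + 3 + (i : ℕ)).descFactorial (j : ℕ) ≠ 0 := by
      intro h
      have := Nat.descFactorial_eq_zero_iff_lt.mp h
      omega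
    exact_mod_cast this
  have hQ : ((m + 3 + (i : ℕ) - (j : ℕ)).factorial : ℚ) *
      ((m + 3 + (i : ℕ)).descFactorial (j : ℕ) : ℚ) = ((m + 3 + (i : ℕ)).factorial : ℚ) := by
    exact_mod_cast congrArg (Nat.cast : ℕ → ℚ) hnat
  rw [← hQ, mul_inv, mul_assoc, inv_mul_cancel₀ hd, mul_one]

private lemma desc_eval (m : ℕ) (i j : Fin (m + 1)) :
    ((m + 3 + (i : ℕ)).descFactorial (j : ℕ) : ℚ) =
      (∏ k ∈ Finset.range (j : ℕ), (X + C ((m + 3 - k : ℕ) : ℚ))).eval ((i : ℕ) : ℚ) := by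
  rw [Polynomial.eval_prod, Nat.descFactorial_eq_prod_range, Nat.cast_prod]
  refine Finset.prod_congr rfl fun k hk => ?_
  have hk' : k < m + 1 := lt_of_lt_of_le (Finset.mem_range.mp hk) (by omega)
  simp only [Polynomial.eval_add, Polynomial.eval_X, Polynomial.eval_C]
  have h1 : m + 3 + (i : ℕ) - k = (i : ℕ) + (m + 3 - k) := by omega
  rw [h1, Nat.cast_add]

private lemma sf_key (m : ℕ) :
    Nat.superFactorial m * Nat.superFactorial (m + 2) =
      (m + 2) * Nat.superFactorial (m + 1) ^ 2 := by
  rw [Nat.superFactorial_succ (m + 1), Nat.superFactorial_succ m,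
    Nat.factorial_succ (m + 1)]
  ring

private lemma sf_split (m : ℕ) :
    (∏ i ∈ Finset.range (m + 1), (m + 3 + i).factorial) * Nat.superFactorial (m + 2) =
      Nat.superFactorial (2 * m + 3) := by
  have h : Nat.superFactorial (2 * m + 3) =
      Nat.superFactorial (m + 2) * ∏ i ∈ Finset.range (m + 1), (m + 3 + i).factorial := by
    rw [← Nat.prod_range_factorial_succ (2 * m + 3),
      show 2 * m + 3 = (m + 2) + (m + 1) from by omega,
      Finset.prod_range_add, Nat.prod_range_factorial_succ]
    congr 1
    refine Finset.prod_congr rfl fun k _ => ?_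
    congr 1
    omega
  rw [h, mul_comm]

private lemma sf_pos : ∀ n : ℕ, 0 < Nat.superFactorial n
  | 0 => Nat.one_pos
  | n + 1 => Nat.mul_pos (Nat.factorial_pos _) (sf_pos n)

/-- For the partition with μ−1 parts all equal to μ+1,
`S^{(μ-1)}_{μ+1,…,μ+1}(1,0,0,…) = det(1/(μ+j-i+1)!)_{1≤i,j≤μ-1}
= μ ∏_{i=1}^{μ-1} (i!)² / ∏_{i=1}^{2μ-1} i!`. -/
theorem stmt_17 (μ : ℕ) (hμ : 2 ≤ μ) :
    Matrix.det (Matrix.of fun i j : Fin (μ - 1) =>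
        eS ((μ : ℤ) + 1 + (j : ℤ) - (i : ℤ))) =
      (μ : ℚ) * (∏ i ∈ Finset.range (μ - 1), ((i + 1).factorial : ℚ) ^ 2)
        / ∏ i ∈ Finset.range (2 * μ - 1), ((i + 1).factorial : ℚ) := by
  obtain ⟨m, rfl⟩ : ∃ m, μ = m + 2 := ⟨μ - 2, by omega⟩
  have h1 : m + 2 - 1 = m + 1 := rfl
  have h2 : 2 * (m + 2) - 1 = 2 * m + 3 := by omega
  show (Matrix.of fun i j : Fin (m + 1) =>
        eS (((m + 2 : ℕ) : ℤ) + 1 + (j : ℤ) - (i : ℤ))).det =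
      ((m + 2 : ℕ) : ℚ) * (∏ i ∈ Finset.range (m + 1), ((i + 1).factorial : ℚ) ^ 2)
        / ∏ i ∈ Finset.range (2 * (m + 2) - 1), ((i + 1).factorial : ℚ)
  rw [h2]
  -- transpose the matrix
  rw [← Matrix.det_transpose]
  have htr : Matrix.transpose (Matrix.of fun i j : Fin (m + 1) =>
        eS (((m + 2 : ℕ) : ℤ) + 1 + (j : ℤ) - (i : ℤ))) =
      Matrix.of fun i j : Fin (m + 1) =>
        ((m + 3 + (i : ℕ)).factorial : ℚ)⁻¹ *
          ((m + 3 + (i : ℕ)).descFactorial (j : ℕ) : ℚ) := by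
    ext i j
    simp only [Matrix.transpose_apply, Matrix.of_apply]
    rw [← entry_eq m i j]
    norm_num
  rw [htr]
  have hmc : (Matrix.of fun i j : Fin (m + 1) =>
        ((m + 3 + (i : ℕ)).factorial : ℚ)⁻¹ *
          ((m + 3 + (i : ℕ)).descFactorial (j : ℕ) : ℚ)).det =
      (∏ i : Fin (m + 1), ((m + 3 + (i : ℕ)).factorial : ℚ)⁻¹) *
        (Matrix.of fun i j : Fin (m + 1) =>
          ((m + 3 + (i : ℕ)).descFactorial (j : ℕ) : ℚ)).det :=
    Matrix.det_mul_column _ _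
  rw [hmc]
  -- evaluate the remaining determinant via Vandermonde
  have hdet : (Matrix.of fun i j : Fin (m + 1) =>
      ((m + 3 + (i : ℕ)).descFactorial (j : ℕ) : ℚ)).det = (Nat.superFactorial m : ℚ) := by
    have heq : (Matrix.of fun i j : Fin (m + 1) =>
        ((m + 3 + (i : ℕ)).descFactorial (j : ℕ) : ℚ)) =
        Matrix.of fun i j : Fin (m + 1) =>
          (∏ k ∈ Finset.range (j : ℕ), (X + C ((m + 3 - k : ℕ) : ℚ))).eval ((i : ℕ) : ℚ) := by
      ext i j
      exact desc_eval m i j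
    rw [heq, ← Matrix.det_eval_matrixOfPolynomials_eq_det_vandermonde
        (fun i : Fin (m + 1) => ((i : ℕ) : ℚ))
        (fun j => ∏ k ∈ Finset.range (j : ℕ), (X + C ((m + 3 - k : ℕ) : ℚ)))
        (fun j => ?_) (fun j => ?_)]
    · exact Matrix.det_vandermonde_id_eq_superFactorial m
    · rw [Polynomial.natDegree_prod_of_monic _ _ (fun k _ => monic_X_add_C _)]
      simp only [Polynomial.natDegree_X_add_C, Finset.sum_const, smul_eq_mul, mul_one,
        Finset.card_range]
    · exact monic_prod_of_monic _ _ fun k _ => monic_X_add_C _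
  rw [hdet]
  -- now a purely numerical identity
  have hfin : (∏ i : Fin (m + 1), ((m + 3 + (i : ℕ)).factorial : ℚ)⁻¹) =
      (∏ i ∈ Finset.range (m + 1), ((m + 3 + i).factorial : ℚ))⁻¹ := by
    rw [Fin.prod_univ_eq_prod_range (fun x => ((m + 3 + x).factorial : ℚ)⁻¹) (m + 1),
      ← Finset.prod_inv_distrib]
  rw [hfin]
  have hA : (∏ i ∈ Finset.range (m + 1), ((m + 3 + i).factorial : ℚ)) ≠ 0 := by
    positivity
  have hs23 : ((Nat.superFactorial (2 * m + 3) : ℕ) : ℚ) ≠ 0 :=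
    Nat.cast_ne_zero.mpr (sf_pos (2 * m + 3)).ne'
  have hsplitQ : (∏ i ∈ Finset.range (m + 1), ((m + 3 + i).factorial : ℚ)) *
      (Nat.superFactorial (m + 2) : ℚ) = (Nat.superFactorial (2 * m + 3) : ℚ) := by
    have := congrArg (Nat.cast : ℕ → ℚ) (sf_split m)
    push_cast at this
    exact this
  have hkeyQ : (Nat.superFactorial m : ℚ) * (Nat.superFactorial (m + 2) : ℚ) =
      ((m : ℚ) + 2) * (Nat.superFactorial (m + 1) : ℚ) ^ 2 := by
    have := congrArg (Nat.cast : ℕ → ℚ) (sf_key m)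
    push_cast at this
    linarith [this]
  have hprodsq : (∏ i ∈ Finset.range (m + 1), ((i + 1).factorial : ℚ) ^ 2) =
      (Nat.superFactorial (m + 1) : ℚ) ^ 2 := by
    rw [Finset.prod_pow]
    norm_cast
    rw [Nat.prod_range_factorial_succ]
  have hden : (∏ i ∈ Finset.range (2 * m + 3), ((i + 1).factorial : ℚ)) =
      (Nat.superFactorial (2 * m + 3) : ℚ) := by
    norm_cast
    rw [Nat.prod_range_factorial_succ]
  rw [hprodsq, hden, show ((m + 2 : ℕ) : ℚ) = (m : ℚ) + 2 from by push_cast; ring]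
  rw [eq_div_iff hs23, ← hsplitQ]
  set A : ℚ := ∏ i ∈ Finset.range (m + 1), ((m + 3 + i).factorial : ℚ) with hAdef
  calc A⁻¹ * (Nat.superFactorial m : ℚ) * (A * (Nat.superFactorial (m + 2) : ℚ))
      = (Nat.superFactorial m : ℚ) * (Nat.superFactorial (m + 2) : ℚ) * (A * A⁻¹) := by
        ring
    _ = (Nat.superFactorial m : ℚ) * (Nat.superFactorial (m + 2) : ℚ) := by
        rw [mul_inv_cancel₀ hA, mul_one]
    _ = ((m : ℚ) + 2) * (Nat.superFactorial (m + 1) : ℚ) ^ 2 := hkeyQ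
end

section
/- For μ ≥ 1 and 1 ≤ i ≤ μ, the function R_i^μ(x) = Σ_{k=0}^{i−1} (−1)^{k−i} x^{μ+i−k−1}/(k!(μ+i−k−1)!) + b Σ_{k=i}^{μ+i−1} (−1)^{k−i} x^{μ+i−k−1}/(k!(μ+i−k−1)!) equals (−1)^i (x−1)^{μ+i−1}/(μ+i−1)! + (−1)^{μ−1}(b−1) Σ_{j=0}^{μ−1} (−x)^j/(j!(μ+i−j−1)!). -/
/-- The polynomial identity
`R_i^μ(x) = ∑_{k=0}^{i-1} (-1)^{k-i} x^{μ+i-k-1}/(k!(μ+i-k-1)!)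
 + b ∑_{k=i}^{μ+i-1} (-1)^{k-i} x^{μ+i-k-1}/(k!(μ+i-k-1)!)
 = (-1)^i (x-1)^{μ+i-1}/(μ+i-1)!
 + (-1)^{μ-1}(b-1) ∑_{j=0}^{μ-1} (-x)^j/(j!(μ+i-j-1)!)`. -/
theorem stmt_19 (b x : ℂ) (μ i : ℕ) (hμ : 1 ≤ μ) (hi1 : 1 ≤ i) (hiμ : i ≤ μ) :
    (∑ k ∈ Finset.range i, (-1 : ℂ) ^ ((k : ℤ) - (i : ℤ)) *
        x ^ (μ + i - k - 1) / ((k.factorial : ℂ) * ((μ + i - k - 1).factorial : ℂ)))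
      + b * ∑ k ∈ Finset.Icc i (μ + i - 1), (-1 : ℂ) ^ ((k : ℤ) - (i : ℤ)) *
          x ^ (μ + i - k - 1) / ((k.factorial : ℂ) * ((μ + i - k - 1).factorial : ℂ))
    = (-1 : ℂ) ^ i * (x - 1) ^ (μ + i - 1) / ((μ + i - 1).factorial : ℂ)
      + (-1 : ℂ) ^ (μ - 1) * (b - 1) *
        ∑ j ∈ Finset.range μ, (-x) ^ j / ((j.factorial : ℂ) * ((μ + i - j - 1).factorial : ℂ)) := by
  have hfac : ∀ n : ℕ, ((n.factorial : ℂ)) ≠ 0 := fun n =>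
    Nat.cast_ne_zero.mpr n.factorial_ne_zero
  have key : ∀ a b : ℕ, a % 2 = b % 2 → (-1 : ℂ) ^ a = (-1) ^ b := by
    intro a b h
    rcases Nat.even_or_odd a with ha | ha
    · have hb : Even b := by rw [Nat.even_iff] at *; omega
      rw [ha.neg_one_pow, hb.neg_one_pow]
    · have hb : Odd b := by rw [Nat.odd_iff] at *; omega
      rw [ha.neg_one_pow, hb.neg_one_pow]
  have hzpow : ∀ k : ℕ, (-1 : ℂ) ^ ((k : ℤ) - (i : ℤ)) = (-1) ^ (k + i) := by
    intro k
    rw [zpow_sub₀ (by norm_num : (-1 : ℂ) ≠ 0), zpow_natCast, zpow_natCast, pow_add,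
      div_eq_mul_inv, ← inv_pow, inv_neg, inv_one]
  simp only [hzpow]
  set f : ℕ → ℂ := fun k => (-1 : ℂ) ^ (k + i) * x ^ (μ + i - k - 1) /
      ((k.factorial : ℂ) * ((μ + i - k - 1).factorial : ℂ)) with hf
  have hsplit : ∑ k ∈ Finset.range (μ + i), f k
      = ∑ k ∈ Finset.range i, f k + ∑ k ∈ Finset.Icc i (μ + i - 1), f k := by
    rw [← Finset.Ico_add_one_right_eq_Icc, show μ + i - 1 + 1 = μ + i by omega, Finset.range_eq_Ico,
      Finset.range_eq_Ico]
    exact (Finset.sum_Ico_consecutive f (Nat.zero_le i) (by omega : i ≤ μ + i)).symm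
  have hbin : ∑ k ∈ Finset.range (μ + i), f k
      = (-1 : ℂ) ^ i * (x - 1) ^ (μ + i - 1) / ((μ + i - 1).factorial : ℂ) := by
    rw [show μ + i = (μ + i - 1) + 1 by omega,
      ← Finset.sum_range_reflect f ((μ + i - 1) + 1), sub_pow, Finset.mul_sum,
      Finset.sum_div]
    simp only [Nat.add_sub_cancel]
    refine Finset.sum_congr rfl fun m hm => ?_
    rw [Finset.mem_range] at hm
    rw [hf]
    dsimp only
    rw [show μ + i - (μ + i - 1 - m) - 1 = m by omega,
      key ((μ + i - 1 - m) + i) (i + (m + (μ + i - 1))) (by omega), pow_add, pow_add,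
      Nat.cast_choose ℂ (by omega : m ≤ μ + i - 1), one_pow]
    field_simp [hfac]
  have hre : ∑ k ∈ Finset.Icc i (μ + i - 1), f k
      = (-1 : ℂ) ^ (μ - 1) * ∑ j ∈ Finset.range μ,
          (-x) ^ j / ((j.factorial : ℂ) * ((μ + i - j - 1).factorial : ℂ)) := by
    rw [Finset.mul_sum]
    refine Finset.sum_nbij' (fun k => μ + i - 1 - k) (fun j => μ + i - 1 - j)
      ?_ ?_ ?_ ?_ ?_
    · intro a ha
      rw [Finset.mem_Icc] at ha
      rw [Finset.mem_range]
      omega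
    · intro a ha
      rw [Finset.mem_range] at ha
      rw [Finset.mem_Icc]
      omega
    · intro a ha
      rw [Finset.mem_Icc] at ha
      omega
    · intro a ha
      rw [Finset.mem_range] at ha
      omega
    · intro k hk
      rw [Finset.mem_Icc] at hk
      rw [hf]
      dsimp only
      rw [show μ + i - k - 1 = μ + i - 1 - k by omega,
        show μ + i - (μ + i - 1 - k) - 1 = k by omega, neg_pow,
        key (k + i) ((μ - 1) + (μ + i - 1 - k)) (by omega), pow_add]
      ring
  have hstep : ∑ k ∈ Finset.range i, f k
        + b * ∑ k ∈ Finset.Icc i (μ + i - 1), f k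
      = (∑ k ∈ Finset.range i, f k + ∑ k ∈ Finset.Icc i (μ + i - 1), f k)
        + (b - 1) * ∑ k ∈ Finset.Icc i (μ + i - 1), f k := by ring
  rw [hstep, ← hsplit, hbin, hre]
  ring
end
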